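/- Let k be a commutative ring, let A and B₀ be commutative k-algebras, and let B be a commutative ring equipped with ring homomorphisms A → B and B₀ → B compatible over k. For A-modules M and N there is a natural isomorphism of B₀-modules (M ⊗_k N) ⊗_{(A ⊗_k A)} (B ⊗_{B₀} B) ≅ (M ⊗_A B) ⊗_{B₀} (N ⊗_A B), where A ⊗_k A acts on B ⊗_{B₀} B through the map (a ⊗ a') ↦ (image of a) ⊗ (image of a'). -/

import Mathlib

open scoped TensorProduct

set_option linter.unusedSectionVars false
set_option maxHeartbeats 1000000

namespace TSBC

variable (k A B₀ B M N : Type*) [CommRing k] [CommRing A] [CommRing B₀] [CommRing B]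
    [Algebra k A] [Algebra k B₀] [Algebra k B] [Algebra A B] [Algebra B₀ B]
    [IsScalarTower k A B] [IsScalarTower k B₀ B]
    [AddCommGroup M] [Module k M] [Module A M] [IsScalarTower k A M]
    [AddCommGroup N] [Module k N] [Module A N] [IsScalarTower k A N]
    [Module (A ⊗[k] A) (M ⊗[k] N)]
    [Module (A ⊗[k] A) (B ⊗[B₀] B)]
    [SMulCommClass (A ⊗[k] A) B₀ (B ⊗[B₀] B)]
    [SMulCommClass A B₀ B]

lemma addHom_ext {R X Y P : Type*} [CommSemiring R] [AddCommMonoid X]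
    [AddCommMonoid Y] [AddCommMonoid P] [Module R X] [Module R Y] {f g : (X ⊗[R] Y) →+ P}
    (h : ∀ x y, f (x ⊗ₜ[R] y) = g (x ⊗ₜ[R] y)) : f = g := by
  refine AddMonoidHom.ext fun z => ?_
  induction z using TensorProduct.induction_on with
  | zero => simp
  | tmul x y => exact h x y
  | add a b ha hb => simp [ha, hb]

noncomputable def fwdPair (b b' : B) :
    (M ⊗[k] N) →+ (B ⊗[A] M) ⊗[B₀] (B ⊗[A] N) :=
  TensorProduct.liftAddHom
    (AddMonoidHom.mk' (fun m => AddMonoidHom.mk'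
        (fun n => ((b ⊗ₜ[A] m) ⊗ₜ[B₀] (b' ⊗ₜ[A] n) : (B ⊗[A] M) ⊗[B₀] (B ⊗[A] N)))
        (fun n₁ n₂ => by simp [TensorProduct.tmul_add]))
      (fun m₁ m₂ => by
        refine AddMonoidHom.ext fun n => ?_
        simp [TensorProduct.tmul_add, TensorProduct.add_tmul]))
    (fun c m n => by
      simp only [AddMonoidHom.mk'_apply, TensorProduct.tmul_smul,
        ← TensorProduct.smul_tmul'])

@[simp] lemma fwdPair_tmul (b b' : B) (m : M) (n : N) :
    fwdPair k A B₀ B M N b b' (m ⊗ₜ[k] n) = (b ⊗ₜ[A] m) ⊗ₜ[B₀] (b' ⊗ₜ[A] n) := by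
  simp [fwdPair]

noncomputable instance fwdHomGrp : AddCommGroup ((M ⊗[k] N) →+ (B ⊗[A] M) ⊗[B₀] (B ⊗[A] N)) :=
  @AddMonoidHom.instAddCommGroup (M ⊗[k] N) ((B ⊗[A] M) ⊗[B₀] (B ⊗[A] N)) _ _

noncomputable def fwdCurry :
    (B ⊗[B₀] B) →+ ((M ⊗[k] N) →+ (B ⊗[A] M) ⊗[B₀] (B ⊗[A] N)) :=
  TensorProduct.liftAddHom
    (AddMonoidHom.mk' (fun b => AddMonoidHom.mk'
        (fun b' => fwdPair k A B₀ B M N b b')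
        (fun b₁' b₂' => addHom_ext fun m n => by
          simp [TensorProduct.add_tmul, TensorProduct.tmul_add]))
      (fun b₁ b₂ => by
        refine AddMonoidHom.ext fun b' => ?_
        refine addHom_ext fun m n => ?_
        simp [TensorProduct.add_tmul, TensorProduct.tmul_add]))
    (fun c b b' => addHom_ext fun m n => by
      simp only [AddMonoidHom.mk'_apply, fwdPair_tmul]
      rw [← TensorProduct.smul_tmul', TensorProduct.smul_tmul, TensorProduct.smul_tmul'])

@[simp] lemma fwdCurry_tmul (b b' : B) (m : M) (n : N) :
    fwdCurry k A B₀ B M N (b ⊗ₜ[B₀] b') (m ⊗ₜ[k] n) = (b ⊗ₜ[A] m) ⊗ₜ[B₀] (b' ⊗ₜ[A] n) := by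
  simp [fwdCurry]

variable (hMN : ∀ (a a' : A) (m : M) (n : N),
      (a ⊗ₜ[k] a' : A ⊗[k] A) • (m ⊗ₜ[k] n) = (a • m) ⊗ₜ[k] (a' • n))
    (hBB : ∀ (a a' : A) (b b' : B),
      (a ⊗ₜ[k] a' : A ⊗[k] A) • (b ⊗ₜ[B₀] b') = (a • b) ⊗ₜ[B₀] (a' • b'))

noncomputable def fwdHom :
    ((B ⊗[B₀] B) ⊗[A ⊗[k] A] (M ⊗[k] N)) →+ (B ⊗[A] M) ⊗[B₀] (B ⊗[A] N) :=
  TensorProduct.liftAddHom (fwdCurry k A B₀ B M N)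
    (fun r x y => by
      induction r using TensorProduct.induction_on with
      | zero => simp
      | add r₁ r₂ h₁ h₂ => simp [add_smul, h₁, h₂]
      | tmul a a' =>
        induction x using TensorProduct.induction_on with
        | zero => simp
        | add x₁ x₂ h₁ h₂ => simp [smul_add, h₁, h₂]
        | tmul b b' =>
          induction y using TensorProduct.induction_on with
          | zero => simp
          | add y₁ y₂ h₁ h₂ => simp [smul_add, h₁, h₂]
          | tmul m n =>
            rw [hBB, hMN]
            simp only [fwdCurry_tmul]
            rw [TensorProduct.smul_tmul a b m, TensorProduct.smul_tmul a' b' n])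

@[simp] lemma fwdHom_tmul (b b' : B) (m : M) (n : N) :
    fwdHom k A B₀ B M N hMN hBB ((b ⊗ₜ[B₀] b') ⊗ₜ[A ⊗[k] A] (m ⊗ₜ[k] n)) =
      (b ⊗ₜ[A] m) ⊗ₜ[B₀] (b' ⊗ₜ[A] n) := by
  simp [fwdHom]

noncomputable def bwdInner (b : B) (m : M) :
    (B ⊗[A] N) →+ (B ⊗[B₀] B) ⊗[A ⊗[k] A] (M ⊗[k] N) :=
  TensorProduct.liftAddHom
    (AddMonoidHom.mk' (fun b' => AddMonoidHom.mk'
        (fun n => ((b ⊗ₜ[B₀] b') ⊗ₜ[A ⊗[k] A] (m ⊗ₜ[k] n) :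
          (B ⊗[B₀] B) ⊗[A ⊗[k] A] (M ⊗[k] N)))
        (fun n₁ n₂ => by simp [TensorProduct.tmul_add]))
      (fun b₁' b₂' => by
        refine AddMonoidHom.ext fun n => ?_
        simp [TensorProduct.tmul_add, TensorProduct.add_tmul]))
    (fun a b' n => by
      simp only [AddMonoidHom.mk'_apply]
      calc (b ⊗ₜ[B₀] (a • b')) ⊗ₜ[A ⊗[k] A] (m ⊗ₜ[k] n)
          = (((1 : A) ⊗ₜ[k] a) • (b ⊗ₜ[B₀] b')) ⊗ₜ[A ⊗[k] A] (m ⊗ₜ[k] n) := by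
            rw [hBB, one_smul]
        _ = (b ⊗ₜ[B₀] b') ⊗ₜ[A ⊗[k] A] (((1 : A) ⊗ₜ[k] a) • (m ⊗ₜ[k] n)) :=
            TensorProduct.smul_tmul _ _ _
        _ = (b ⊗ₜ[B₀] b') ⊗ₜ[A ⊗[k] A] (m ⊗ₜ[k] (a • n)) := by
            rw [hMN, one_smul])

@[simp] lemma bwdInner_tmul (b : B) (m : M) (b' : B) (n : N) :
    bwdInner k A B₀ B M N hMN hBB b m (b' ⊗ₜ[A] n) =
      (b ⊗ₜ[B₀] b') ⊗ₜ[A ⊗[k] A] (m ⊗ₜ[k] n) := by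
  simp [bwdInner]

noncomputable def bwdCurry :
    (B ⊗[A] M) →+ ((B ⊗[A] N) →+ (B ⊗[B₀] B) ⊗[A ⊗[k] A] (M ⊗[k] N)) :=
  TensorProduct.liftAddHom
    (AddMonoidHom.mk' (fun b => AddMonoidHom.mk'
        (fun m => bwdInner k A B₀ B M N hMN hBB b m)
        (fun m₁ m₂ => addHom_ext fun b' n => by
          simp [TensorProduct.add_tmul, TensorProduct.tmul_add]))
      (fun b₁ b₂ => by
        refine AddMonoidHom.ext fun m => ?_
        refine addHom_ext fun b' n => ?_
        simp [TensorProduct.add_tmul, TensorProduct.tmul_add]))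
    (fun a b m => addHom_ext fun b' n => by
      simp only [AddMonoidHom.mk'_apply, bwdInner_tmul]
      calc ((a • b) ⊗ₜ[B₀] b') ⊗ₜ[A ⊗[k] A] (m ⊗ₜ[k] n)
          = ((a ⊗ₜ[k] (1 : A)) • (b ⊗ₜ[B₀] b')) ⊗ₜ[A ⊗[k] A] (m ⊗ₜ[k] n) := by
            rw [hBB, one_smul]
        _ = (b ⊗ₜ[B₀] b') ⊗ₜ[A ⊗[k] A] ((a ⊗ₜ[k] (1 : A)) • (m ⊗ₜ[k] n)) :=
            TensorProduct.smul_tmul _ _ _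
        _ = (b ⊗ₜ[B₀] b') ⊗ₜ[A ⊗[k] A] ((a • m) ⊗ₜ[k] n) := by
            rw [hMN, one_smul])

@[simp] lemma bwdCurry_tmul (b b' : B) (m : M) (n : N) :
    bwdCurry k A B₀ B M N hMN hBB (b ⊗ₜ[A] m) (b' ⊗ₜ[A] n) =
      (b ⊗ₜ[B₀] b') ⊗ₜ[A ⊗[k] A] (m ⊗ₜ[k] n) := by
  simp [bwdCurry]

noncomputable def bwdHom :
    ((B ⊗[A] M) ⊗[B₀] (B ⊗[A] N)) →+ (B ⊗[B₀] B) ⊗[A ⊗[k] A] (M ⊗[k] N) :=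
  TensorProduct.liftAddHom (bwdCurry k A B₀ B M N hMN hBB)
    (fun c x y => by
      induction x using TensorProduct.induction_on with
      | zero => simp
      | add x₁ x₂ h₁ h₂ => simp [smul_add, h₁, h₂]
      | tmul b m =>
        induction y using TensorProduct.induction_on with
        | zero => simp
        | add y₁ y₂ h₁ h₂ => simp [smul_add, h₁, h₂]
        | tmul b' n =>
          rw [TensorProduct.smul_tmul' c b m, TensorProduct.smul_tmul' c b' n]
          simp only [bwdCurry_tmul]
          rw [TensorProduct.smul_tmul c b b'])

@[simp] lemma bwdHom_tmul (b b' : B) (m : M) (n : N) :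
    bwdHom k A B₀ B M N hMN hBB ((b ⊗ₜ[A] m) ⊗ₜ[B₀] (b' ⊗ₜ[A] n)) =
      (b ⊗ₜ[B₀] b') ⊗ₜ[A ⊗[k] A] (m ⊗ₜ[k] n) := by
  simp [bwdHom]

lemma fwdHom_smul (c : B₀) (x : (B ⊗[B₀] B) ⊗[A ⊗[k] A] (M ⊗[k] N)) :
    fwdHom k A B₀ B M N hMN hBB (c • x) = c • fwdHom k A B₀ B M N hMN hBB x := by
  induction x using TensorProduct.induction_on with
  | zero => simp
  | add x y hx hy => simp [smul_add, hx, hy]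
  | tmul X Y =>
    rw [TensorProduct.smul_tmul']
    induction X using TensorProduct.induction_on with
    | zero => simp
    | add X₁ X₂ h₁ h₂ => simp [smul_add, TensorProduct.add_tmul, h₁, h₂]
    | tmul b b' =>
      rw [TensorProduct.smul_tmul']
      induction Y using TensorProduct.induction_on with
      | zero => simp
      | add Y₁ Y₂ h₁ h₂ => simp [TensorProduct.tmul_add, smul_add, h₁, h₂]
      | tmul m n => simp [TensorProduct.smul_tmul']

lemma bwd_fwd (z : (B ⊗[B₀] B) ⊗[A ⊗[k] A] (M ⊗[k] N)) :
    bwdHom k A B₀ B M N hMN hBB (fwdHom k A B₀ B M N hMN hBB z) = z := by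
  induction z using TensorProduct.induction_on with
  | zero => simp
  | add x y hx hy => simp [hx, hy]
  | tmul X Y =>
    induction X using TensorProduct.induction_on with
    | zero => simp
    | add X₁ X₂ h₁ h₂ => simp [TensorProduct.add_tmul, h₁, h₂]
    | tmul b b' =>
      induction Y using TensorProduct.induction_on with
      | zero => simp
      | add Y₁ Y₂ h₁ h₂ => simp [TensorProduct.tmul_add, h₁, h₂]
      | tmul m n => simp

lemma fwd_bwd (z : (B ⊗[A] M) ⊗[B₀] (B ⊗[A] N)) :
    fwdHom k A B₀ B M N hMN hBB (bwdHom k A B₀ B M N hMN hBB z) = z := by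
  induction z using TensorProduct.induction_on with
  | zero => simp
  | add x y hx hy => simp [hx, hy]
  | tmul X Y =>
    induction X using TensorProduct.induction_on with
    | zero => simp
    | add X₁ X₂ h₁ h₂ => simp [TensorProduct.add_tmul, h₁, h₂]
    | tmul b m =>
      induction Y using TensorProduct.induction_on with
      | zero => simp
      | add Y₁ Y₂ h₁ h₂ => simp [TensorProduct.tmul_add, h₁, h₂]
      | tmul b' n => simp

include hMN hBB in
theorem exists_equiv :
    ∃ e : ((B ⊗[B₀] B) ⊗[A ⊗[k] A] (M ⊗[k] N)) ≃ₗ[B₀] ((B ⊗[A] M) ⊗[B₀] (B ⊗[A] N)),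
      ∀ (b b' : B) (m : M) (n : N),
        e ((b ⊗ₜ[B₀] b') ⊗ₜ[A ⊗[k] A] (m ⊗ₜ[k] n)) = (b ⊗ₜ[A] m) ⊗ₜ[B₀] (b' ⊗ₜ[A] n) := by
  refine ⟨{ toFun := fwdHom k A B₀ B M N hMN hBB,
            map_add' := map_add _,
            map_smul' := fun c x => fwdHom_smul k A B₀ B M N hMN hBB c x,
            invFun := bwdHom k A B₀ B M N hMN hBB,
            left_inv := bwd_fwd k A B₀ B M N hMN hBB,
            right_inv := fwd_bwd k A B₀ B M N hMN hBB }, ?_⟩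
  intro b b' m n
  exact fwdHom_tmul k A B₀ B M N hMN hBB b b' m n

end TSBC

/-- For `k`-algebras `A₁, A₂` and modules `M₁` over `A₁`, `M₂` over `A₂`, the tensor product
`M₁ ⊗[k] M₂` is a module over `A₁ ⊗[k] A₂`, acting factorwise. -/
noncomputable def tensorTensorModule (k A₁ A₂ M₁ M₂ : Type*) [CommRing k]
    [CommRing A₁] [CommRing A₂] [Algebra k A₁] [Algebra k A₂]
    [AddCommGroup M₁] [Module k M₁] [Module A₁ M₁] [IsScalarTower k A₁ M₁]
    [AddCommGroup M₂] [Module k M₂] [Module A₂ M₂] [IsScalarTower k A₂ M₂] :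
    Module (A₁ ⊗[k] A₂) (M₁ ⊗[k] M₂) :=
  Module.compHom (M₁ ⊗[k] M₂)
    ((Module.endTensorEndAlgHom (R := k) (S := k) (A := k) (M := M₁) (N := M₂)).comp
      (Algebra.TensorProduct.map (Algebra.lsmul k k M₁) (Algebra.lsmul k k M₂))).toRingHom

/-- Base-change comparison for factorization homology (pointwise form): for `k`-algebras
`A`, `B₀`, `B` with compatible maps `A → B`, `B₀ → B`, and `A`-modules `M`, `N`, one has
`(M ⊗ₖ N) ⊗_{A ⊗ₖ A} (B ⊗_{B₀} B) ≅ (M ⊗_A B) ⊗_{B₀} (N ⊗_A B)` as `B₀`-modules, where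
`A ⊗ₖ A` acts on `B ⊗_{B₀} B` through the two maps `A → B`. -/
theorem tensor_square_base_change
    (k A B₀ B M N : Type*) [CommRing k] [CommRing A] [CommRing B₀] [CommRing B]
    [Algebra k A] [Algebra k B₀] [Algebra k B] [Algebra A B] [Algebra B₀ B]
    [IsScalarTower k A B] [IsScalarTower k B₀ B]
    [AddCommGroup M] [Module k M] [Module A M] [IsScalarTower k A M]
    [AddCommGroup N] [Module k N] [Module A N] [IsScalarTower k A N] :
    letI : Module (A ⊗[k] A) (M ⊗[k] N) := tensorTensorModule k A A M N
    letI : Algebra (A ⊗[k] A) (B ⊗[B₀] B) :=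
      (Algebra.TensorProduct.productMap
        (((Algebra.TensorProduct.includeLeft :
            B →ₐ[B₀] B ⊗[B₀] B).restrictScalars k).comp (IsScalarTower.toAlgHom k A B))
        (((Algebra.TensorProduct.includeRight :
            B →ₐ[B₀] B ⊗[B₀] B).restrictScalars k).comp
          (IsScalarTower.toAlgHom k A B))).toRingHom.toAlgebra
    letI : SMulCommClass (A ⊗[k] A) B₀ (B ⊗[B₀] B) :=
      ⟨fun r s x => by simp only [Algebra.smul_def]; exact mul_left_comm _ _ _⟩
    letI : SMulCommClass A B₀ B :=
      ⟨fun r s x => by simp only [Algebra.smul_def]; exact mul_left_comm _ _ _⟩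
    ∃ e : ((B ⊗[B₀] B) ⊗[A ⊗[k] A] (M ⊗[k] N)) ≃ₗ[B₀]
        ((B ⊗[A] M) ⊗[B₀] (B ⊗[A] N)),
      ∀ (b b' : B) (m : M) (n : N),
        e ((b ⊗ₜ[B₀] b') ⊗ₜ[A ⊗[k] A] (m ⊗ₜ[k] n)) =
          (b ⊗ₜ[A] m) ⊗ₜ[B₀] (b' ⊗ₜ[A] n) := by
  letI : Module (A ⊗[k] A) (M ⊗[k] N) := tensorTensorModule k A A M N
  letI : Algebra (A ⊗[k] A) (B ⊗[B₀] B) :=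
      (Algebra.TensorProduct.productMap
        (((Algebra.TensorProduct.includeLeft :
            B →ₐ[B₀] B ⊗[B₀] B).restrictScalars k).comp (IsScalarTower.toAlgHom k A B))
        (((Algebra.TensorProduct.includeRight :
            B →ₐ[B₀] B ⊗[B₀] B).restrictScalars k).comp
          (IsScalarTower.toAlgHom k A B))).toRingHom.toAlgebra
  letI : SMulCommClass (A ⊗[k] A) B₀ (B ⊗[B₀] B) :=
      ⟨fun r s x => by simp only [Algebra.smul_def]; exact mul_left_comm _ _ _⟩
  letI : SMulCommClass A B₀ B :=
      ⟨fun r s x => by simp only [Algebra.smul_def]; exact mul_left_comm _ _ _⟩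
  have hMN : ∀ (a a' : A) (m : M) (n : N),
      (a ⊗ₜ[k] a' : A ⊗[k] A) • (m ⊗ₜ[k] n) = (a • m) ⊗ₜ[k] (a' • n) := by
    intro a a' m n
    show (Module.endTensorEndAlgHom (R := k) (S := k) (A := k) (M := M) (N := N)
      ((Algebra.TensorProduct.map (Algebra.lsmul k k M)
        (Algebra.lsmul k k N)) (a ⊗ₜ[k] a'))) (m ⊗ₜ[k] n) = _
    simp [Module.endTensorEndAlgHom_apply]
  have hBB : ∀ (a a' : A) (b b' : B),
      (a ⊗ₜ[k] a' : A ⊗[k] A) • (b ⊗ₜ[B₀] b') = (a • b) ⊗ₜ[B₀] (a' • b') := by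
    intro a a' b b'
    rw [Algebra.smul_def, RingHom.algebraMap_toAlgebra]
    simp [Algebra.TensorProduct.productMap_apply_tmul, Algebra.TensorProduct.tmul_mul_tmul,
      Algebra.smul_def]
  exact TSBC.exists_equiv k A B₀ B M N hMN hBB
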